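/- Let m, n, d′ be positive integers and let a₀, …, a_{d′−1} ∈ ℂ[[X]] be one-variable power series with ord a_i > m·n·(d′ − i) for each i. Set f′(X,Y) = Y^{d′} + Σ_{i=0}^{d′−1} a_i(X)·Y^i. Then for every positive integer N, the set of pairs (x,y) of power series in ℂ[[t]] with zero constant term satisfying y ≠ 0 and ord y ≤ m·n·ord x (convention ord 0 = ∞) such that f′(x,y) has the form t^N plus terms of order greater than N is equal to the set of such pairs for which y^{d′} has the form t^N plus terms of order greater than N. -/

import Mathlib

open PowerSeries

/-- Composition `F(x)` of one-variable formal power series.  (The formula below computes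
the correct substitution whenever `x` has zero constant term.) -/
noncomputable def psEval (F : PowerSeries ℂ) (x : PowerSeries ℂ) : PowerSeries ℂ :=
  PowerSeries.mk fun k =>
    ∑ j ∈ Finset.range (k + 1), PowerSeries.coeff j F * PowerSeries.coeff k (x ^ j)

lemma order_pow' (y : PowerSeries ℂ) (j : ℕ) :
    (y ^ j).order = (j : ℕ∞) * y.order := by
  induction j with
  | zero => simp [PowerSeries.order_one]
  | succ j ih =>
      rw [pow_succ, PowerSeries.order_mul, ih]
      push_cast
      ring

lemma psEval_coeff_eq_zero (F x : PowerSeries ℂ) (c : ℕ)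
    (hx : PowerSeries.constantCoeff x = 0) (hF : (c : ℕ∞) < F.order)
    (p : ℕ) (hp : (p : ℕ∞) ≤ (c : ℕ∞) * x.order) :
    PowerSeries.coeff p (psEval F x) = 0 := by
  have hx1 : (1 : ℕ∞) ≤ x.order := by
    have := PowerSeries.nat_le_order x 1 (fun i hi => by
      interval_cases i
      simpa [PowerSeries.coeff_zero_eq_constantCoeff] using hx)
    simpa using this
  simp only [psEval, PowerSeries.coeff_mk]
  apply Finset.sum_eq_zero
  intro l _
  by_cases hl : l ≤ c
  · have : PowerSeries.coeff l F = 0 := by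
      apply PowerSeries.coeff_of_lt_order
      exact lt_of_le_of_lt (by exact_mod_cast hl) hF
    rw [this, zero_mul]
  · have hlc : c + 1 ≤ l := by omega
    have hxl : PowerSeries.coeff p (x ^ l) = 0 := by
      apply PowerSeries.coeff_of_lt_order
      rw [order_pow']
      calc (p : ℕ∞) < (p : ℕ∞) + 1 := by
            exact_mod_cast Nat.lt_succ_self p
        _ ≤ (c : ℕ∞) * x.order + 1 := by exact add_le_add_left hp 1
        _ ≤ (c : ℕ∞) * x.order + x.order := by exact add_le_add_right hx1 _
        _ = ((c : ℕ∞) + 1) * x.order := by ring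
        _ ≤ (l : ℕ∞) * x.order := by
            apply mul_le_mul_left
            exact_mod_cast hlc
    rw [hxl, mul_zero]

lemma correction_coeff_zero (m n d' : ℕ) (a : ℕ → PowerSeries ℂ)
    (ha : ∀ i < d', ((m * n * (d' - i) : ℕ) : ℕ∞) < (a i).order)
    (x y : PowerSeries ℂ) (hx : PowerSeries.constantCoeff x = 0)
    (hord : y.order ≤ ((m * n : ℕ) : ℕ∞) * x.order)
    (e : ℕ) (he : y.order = (e : ℕ∞))
    (k : ℕ) (hk : k ≤ d' * e) :
    PowerSeries.coeff k (∑ j ∈ Finset.range d', psEval (a j) x * y ^ j) = 0 := by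
  rw [map_sum]
  apply Finset.sum_eq_zero
  intro j hj
  rw [Finset.mem_range] at hj
  rw [PowerSeries.coeff_mul]
  apply Finset.sum_eq_zero
  intro p hp
  rw [Finset.HasAntidiagonal.mem_antidiagonal] at hp
  by_cases hq : PowerSeries.coeff p.2 (y ^ j) = 0
  · rw [hq, mul_zero]
  · have hje : j * e ≤ p.2 := by
      have h1 := PowerSeries.order_le p.2 hq
      rw [order_pow', he] at h1
      exact_mod_cast h1
    have hp1 : p.1 ≤ (d' - j) * e := by
      have hde : d' * e = (d' - j) * e + j * e := by
        rw [← Nat.add_mul, Nat.sub_add_cancel hj.le]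
      omega
    have : PowerSeries.coeff p.1 (psEval (a j) x) = 0 := by
      apply psEval_coeff_eq_zero (a j) x (m * n * (d' - j)) hx (ha j hj)
      calc (p.1 : ℕ∞) ≤ (((d' - j) * e : ℕ) : ℕ∞) := by exact_mod_cast hp1
        _ = ((d' - j : ℕ) : ℕ∞) * y.order := by rw [he]; push_cast; ring
        _ ≤ ((d' - j : ℕ) : ℕ∞) * (((m * n : ℕ) : ℕ∞) * x.order) :=
            mul_le_mul_right hord _
        _ = ((m * n * (d' - j) : ℕ) : ℕ∞) * x.order := by push_cast; ring
    rw [this, zero_mul]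

/-- Let `m, n, d′` be positive integers and let `a₀, …, a_{d′−1} ∈ ℂ[[X]]` satisfy
`ord aᵢ > m·n·(d′ − i)`.  Set `f′(X,Y) = Y^{d′} + Σ aᵢ(X)·Yⁱ`.  Then for every positive
integer `N`, the pairs `(x,y)` of power series with zero constant term satisfying `y ≠ 0`
and `ord y ≤ m·n·ord x` (convention `ord 0 = ∞`) for which `f′(x,y) = t^N + (higher order)`
are exactly the pairs of that kind for which `y^{d′} = t^N + (higher order)`. -/
theorem stmt10 (m n d' : ℕ) (hm : 0 < m) (hn : 0 < n) (hd' : 0 < d')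
    (a : ℕ → PowerSeries ℂ)
    (ha : ∀ i < d', ((m * n * (d' - i) : ℕ) : ℕ∞) < (a i).order)
    (N : ℕ) (hN : 0 < N) :
    {xy : PowerSeries ℂ × PowerSeries ℂ |
        PowerSeries.constantCoeff xy.1 = 0 ∧ PowerSeries.constantCoeff xy.2 = 0 ∧
        xy.2 ≠ 0 ∧ xy.2.order ≤ ((m * n : ℕ) : ℕ∞) * xy.1.order ∧
        (∀ i < N, PowerSeries.coeff i
            (xy.2 ^ d' + ∑ j ∈ Finset.range d', psEval (a j) xy.1 * xy.2 ^ j) = 0) ∧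
        PowerSeries.coeff N
            (xy.2 ^ d' + ∑ j ∈ Finset.range d', psEval (a j) xy.1 * xy.2 ^ j) = 1} =
    {xy : PowerSeries ℂ × PowerSeries ℂ |
        PowerSeries.constantCoeff xy.1 = 0 ∧ PowerSeries.constantCoeff xy.2 = 0 ∧
        xy.2 ≠ 0 ∧ xy.2.order ≤ ((m * n : ℕ) : ℕ∞) * xy.1.order ∧
        (∀ i < N, PowerSeries.coeff i (xy.2 ^ d') = 0) ∧
        PowerSeries.coeff N (xy.2 ^ d') = 1} := by
  ext ⟨x, y⟩
  simp only [Set.mem_setOf_eq]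
  constructor
  · rintro ⟨hx, hy, hyne, hord, hlow, hNc⟩
    refine ⟨hx, hy, hyne, hord, ?_⟩
    obtain ⟨e, he⟩ : ∃ e : ℕ, y.order = (e : ℕ∞) := by
      have := (PowerSeries.order_finite_iff_ne_zero.2 hyne).ne
      lift y.order to ℕ using this with e
      exact ⟨e, rfl⟩
    have hop : (y ^ d').order = ((d' * e : ℕ) : ℕ∞) := by
      rw [order_pow', he]; push_cast; ring
    have hNle : N ≤ d' * e := by
      by_contra h
      push_neg at h
      have hlead : PowerSeries.coeff (d' * e) (y ^ d') ≠ 0 :=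
        (PowerSeries.order_eq_nat.mp hop).1
      have h0 := hlow (d' * e) h
      rw [map_add, correction_coeff_zero m n d' a ha x y hx hord e he _ le_rfl,
        add_zero] at h0
      exact hlead h0
    constructor
    · intro i hi
      have h0 := hlow i hi
      rw [map_add, correction_coeff_zero m n d' a ha x y hx hord e he _
        (le_trans hi.le hNle), add_zero] at h0
      exact h0
    · rw [map_add, correction_coeff_zero m n d' a ha x y hx hord e he _ hNle,
        add_zero] at hNc
      exact hNc
  · rintro ⟨hx, hy, hyne, hord, hlow, hNc⟩
    refine ⟨hx, hy, hyne, hord, ?_⟩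
    obtain ⟨e, he⟩ : ∃ e : ℕ, y.order = (e : ℕ∞) := by
      have := (PowerSeries.order_finite_iff_ne_zero.2 hyne).ne
      lift y.order to ℕ using this with e
      exact ⟨e, rfl⟩
    have hop : (y ^ d').order = ((d' * e : ℕ) : ℕ∞) := by
      rw [order_pow', he]; push_cast; ring
    have hNle : N ≤ d' * e := by
      have := PowerSeries.nat_le_order (y ^ d') N hlow
      rw [hop] at this
      exact_mod_cast this
    constructor
    · intro i hi
      rw [map_add, correction_coeff_zero m n d' a ha x y hx hord e he _
        (le_trans hi.le hNle), add_zero]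
      exact hlow i hi
    · rw [map_add, correction_coeff_zero m n d' a ha x y hx hord e he _ hNle,
        add_zero]
      exact hNc
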